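/- Let a, b be real numbers with 0 < a < b, let f : ℝ → ℝ be continuous on [a,b) and strictly positive on (a,b), with f(a) = 0, and suppose f is differentiable at a with f'(a) > 0. Fix ρ₀ > 0, define I(r) = ∫_a^r (1/√(f(x)) − 1)/x dx and ρ(r) = ρ₀·r·exp(I(r)) for r ∈ (a,b), and set ρ₊ = ρ₀·a. Then, as r → a from the right, (r − a)/(ρ(r) − ρ₊)² tends to f'(a)/(4ρ₀²). -/

import Mathlib

open MeasureTheory Set Real Filter Topology

/-- Quadratic behavior of the inverse isotropic map at a simple (nonextremal) horizon:
as r → a⁺, (r − a)/(ρ(r) − ρ₊)² → f'(a)/(4ρ₀²). -/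
theorem isotropic_inverse_quadratic_at_horizon
    (a b : ℝ) (ha : 0 < a) (hab : a < b) (f : ℝ → ℝ)
    (hcont : ContinuousOn f (Set.Ico a b))
    (hpos : ∀ x ∈ Set.Ioo a b, 0 < f x)
    (hfa : f a = 0)
    (f' : ℝ) (hderiv : HasDerivAt f f' a) (hf' : 0 < f')
    (ρ₀ : ℝ) (hρ₀ : 0 < ρ₀)
    (I ρ : ℝ → ℝ)
    (hI : ∀ r ∈ Set.Ioo a b, I r = ∫ x in a..r, (1 / Real.sqrt (f x) - 1) / x)
    (hρ : ∀ r ∈ Set.Ioo a b, ρ r = ρ₀ * r * Real.exp (I r)) :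
    Tendsto (fun r => (r - a) / (ρ r - ρ₀ * a) ^ 2)
      (nhdsWithin a (Set.Ioo a b)) (nhds (f' / (4 * ρ₀ ^ 2))) := by
  rw [nhdsWithin_Ioo_eq_nhdsGT hab]
  set g : ℝ → ℝ := fun x => (1 / Real.sqrt (f x) - 1) / x with hg
  -- Step A : find c with lower bound on f
  have hlo : ∀ᶠ x in 𝓝 a, a ≤ x → f' / 2 * (x - a) ≤ f x := by
    have h := (hasDerivAt_iff_isLittleO.mp hderiv).def (half_pos hf')
    filter_upwards [h] with x hx hax
    rw [hfa] at hx
    simp only [smul_eq_mul, sub_zero, Real.norm_eq_abs] at hx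
    rw [show |x - a| = x - a from abs_of_nonneg (by linarith)] at hx
    have h2 := (abs_le.mp hx).1
    linarith
  obtain ⟨δ, hδ, hδlo⟩ := Metric.eventually_nhds_iff.mp hlo
  set c : ℝ := a + min δ (b - a) / 2 with hc
  have hminpos : 0 < min δ (b - a) := lt_min hδ (by linarith)
  have hac : a < c := by rw [hc]; linarith
  have hcb : c < b := by
    have h3 : min δ (b - a) ≤ b - a := min_le_right _ _
    rw [hc]; linarith
  have hIocIoo : Set.Ioc a c ⊆ Set.Ioo a b := fun x hx => ⟨hx.1, lt_of_le_of_lt hx.2 hcb⟩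
  have hIooIoo : Set.Ioo a c ⊆ Set.Ioo a b := fun x hx => ⟨hx.1, lt_trans hx.2 hcb⟩
  have hlow : ∀ x ∈ Set.Ioc a c, f' / 2 * (x - a) ≤ f x := by
    intro x hx
    have hd : dist x a < δ := by
      rw [Real.dist_eq, abs_of_pos (by linarith [hx.1])]
      have h4 : x ≤ c := hx.2
      have h5 : min δ (b - a) ≤ δ := min_le_left _ _
      rw [hc] at h4; linarith
    exact hδlo hd hx.1.le
  -- basic filter memberships
  have hmem : Set.Ioo a b ∈ 𝓝[>] a := by
    rw [← nhdsWithin_Ioo_eq_nhdsGT hab]; exact self_mem_nhdsWithin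
  have hmemc : Set.Ioo a c ∈ 𝓝[>] a := by
    rw [← nhdsWithin_Ioo_eq_nhdsGT hac]; exact self_mem_nhdsWithin
  -- continuity of g on Ioo a b
  have hgcont : ContinuousOn g (Set.Ioo a b) := by
    apply ContinuousOn.div
    · apply ContinuousOn.sub
      · apply ContinuousOn.div continuousOn_const
        · exact (hcont.mono Set.Ioo_subset_Ico_self).sqrt
        · intro x hx
          exact (Real.sqrt_pos.mpr (hpos x hx)).ne'
      · exact continuousOn_const
    · exact continuousOn_id
    · intro x hx; exact (lt_trans ha hx.1).ne'
  -- Step B : integrability on a..c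
  have hB : IntervalIntegrable
      (fun x => (Real.sqrt (2 / f') * (x - a) ^ (-(1/2) : ℝ) + 1) / a) volume a c := by
    apply IntervalIntegrable.div_const
    apply IntervalIntegrable.add _ intervalIntegrable_const
    apply IntervalIntegrable.const_mul
    have h0 : IntervalIntegrable (fun x : ℝ => x ^ (-(1/2) : ℝ)) volume (a - a) (c - a) :=
      intervalIntegral.intervalIntegrable_rpow' (by norm_num)
    simpa using h0.comp_sub_right a
  have hgint : IntervalIntegrable g volume a c := by
    rw [intervalIntegrable_iff_integrableOn_Ioc_of_le hac.le]
    have hBint : IntegrableOn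
        (fun x => (Real.sqrt (2 / f') * (x - a) ^ (-(1/2) : ℝ) + 1) / a) (Set.Ioc a c) volume := by
      have h6 := hB.1
      simpa [Set.uIoc_of_le hac.le] using h6
    apply Integrable.mono' hBint
    · exact (hgcont.mono hIocIoo).aestronglyMeasurable measurableSet_Ioc
    · refine (ae_restrict_iff' measurableSet_Ioc).mpr (.of_forall fun x hx => ?_)
      have hxa : a < x := hx.1
      have hfx : 0 < f x := hpos x (hIocIoo hx)
      have hxa' : (0:ℝ) < x - a := by linarith
      have h1 : (1 : ℝ) / Real.sqrt (f x) ≤ Real.sqrt (2 / f') * (x - a) ^ (-(1/2) : ℝ) := by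
        rw [Real.rpow_neg hxa'.le, ← Real.sqrt_eq_rpow, one_div, ← Real.sqrt_inv,
          ← Real.sqrt_inv (x - a), ← Real.sqrt_mul (by positivity)]
        apply Real.sqrt_le_sqrt
        refine le_trans (inv_anti₀ (by positivity) (hlow x hx)) (le_of_eq ?_)
        field_simp
      rw [Real.norm_eq_abs, hg]
      simp only
      rw [abs_div, abs_of_pos (by linarith : (0:ℝ) < x)]
      apply div_le_div₀ (by positivity) _ ha (by linarith)
      calc |1 / Real.sqrt (f x) - 1| ≤ |1 / Real.sqrt (f x)| + |1| := abs_sub _ _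
        _ = 1 / Real.sqrt (f x) + 1 := by
            rw [abs_of_nonneg (by positivity), abs_one]
        _ ≤ Real.sqrt (2 / f') * (x - a) ^ (-(1/2) : ℝ) + 1 := by linarith
  -- Step C : integrability up to any r ≤ c
  have h_int : ∀ r ∈ Set.Ioc a c, IntervalIntegrable g volume a r := by
    intro r hr
    exact hgint.mono_set (Set.uIcc_subset_uIcc left_mem_uIcc
      (Set.mem_uIcc.mpr (Or.inl ⟨hr.1.le, hr.2⟩)))
  -- Step D : derivative of I
  have hIderiv : ∀ x ∈ Set.Ioo a c, HasDerivAt I (g x) x := by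
    intro x hx
    have hxm : x ∈ Set.Ioo a b := hIooIoo hx
    have hca : ContinuousAt g x := hgcont.continuousAt (Ioo_mem_nhds hxm.1 hxm.2)
    have hP : HasDerivAt (fun u => ∫ t in a..u, g t) (g x) x :=
      intervalIntegral.integral_hasDerivAt_right (h_int x ⟨hx.1, hx.2.le⟩)
        (hgcont.stronglyMeasurableAtFilter isOpen_Ioo x hxm) hca
    apply hP.congr_of_eventuallyEq
    filter_upwards [Ioo_mem_nhds hxm.1 hxm.2] with y hy using hI y hy
  -- Step E : I tends to 0
  have hItend : Tendsto I (𝓝[>] a) (𝓝 0) := by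
    have hcw : ContinuousWithinAt (fun u => ∫ t in a..u, g t) (Set.Icc a c) a := by
      apply intervalIntegral.continuousWithinAt_primitive (measure_singleton a)
      rw [min_self, max_eq_right hac.le]; exact hgint
    have h0 : Tendsto (fun u => ∫ t in a..u, g t) (𝓝[Set.Icc a c] a) (𝓝 0) := by
      simpa [ContinuousWithinAt, intervalIntegral.integral_same] using hcw
    have hsub2 : 𝓝[>] a ≤ 𝓝[Set.Icc a c] a := by
      rw [← nhdsWithin_Ioo_eq_nhdsGT hac]
      exact nhdsWithin_mono _ Set.Ioo_subset_Icc_self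
    refine (h0.mono_left hsub2).congr' ?_
    filter_upwards [hmem] with y hy using (hI y hy).symm
  -- Step F : ρ - ρ₊ tends to 0
  have tid : Tendsto (fun r : ℝ => r) (𝓝[>] a) (𝓝 a) := tendsto_id.mono_left nhdsWithin_le_nhds
  have hexp : Tendsto (fun r => Real.exp (I r)) (𝓝[>] a) (𝓝 1) := by
    simpa [Function.comp_def] using (Real.continuous_exp.tendsto 0).comp hItend
  have hρ0 : Tendsto (fun r => ρ r - ρ₀ * a) (𝓝[>] a) (𝓝 0) := by
    have h1 : Tendsto (fun r => ρ₀ * r * Real.exp (I r) - ρ₀ * a) (𝓝[>] a) (𝓝 0) := by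
      have h2 : Tendsto (fun r => ρ₀ * r * Real.exp (I r) - ρ₀ * a) (𝓝[>] a)
          (𝓝 (ρ₀ * a * 1 - ρ₀ * a)) :=
        ((tendsto_const_nhds.mul tid).mul hexp).sub_const (ρ₀ * a)
      simpa using h2
    refine h1.congr' ?_
    filter_upwards [hmem] with r hr
    rw [hρ r hr]
  -- Step G : derivative of ρ - ρ₊
  have hφd : ∀ x ∈ Set.Ioo a c,
      HasDerivAt (fun r => ρ r - ρ₀ * a) (ρ₀ * Real.exp (I x) / Real.sqrt (f x)) x := by
    intro x hx
    have hxm : x ∈ Set.Ioo a b := hIooIoo hx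
    have hfx : 0 < f x := hpos x hxm
    have hsq : Real.sqrt (f x) ≠ 0 := (Real.sqrt_pos.mpr hfx).ne'
    have hx0 : x ≠ 0 := (lt_trans ha hxm.1).ne'
    have hd1 : HasDerivAt (fun r : ℝ => ρ₀ * r) ρ₀ x := by
      simpa using (hasDerivAt_id x).const_mul ρ₀
    have hd2 : HasDerivAt (fun r => Real.exp (I r)) (Real.exp (I x) * g x) x :=
      (hIderiv x hx).exp
    have hd3 := hd1.mul hd2
    have hval : ρ₀ * (Real.exp (I x) * g x) * x + ρ₀ * x * (Real.exp (I x) * g x) -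
        ρ₀ * x * (Real.exp (I x) * g x) + ρ₀ * Real.exp (I x)
        = ρ₀ * Real.exp (I x) / Real.sqrt (f x) := by
      rw [hg]; field_simp; ring
    have hd4 : HasDerivAt (fun r => ρ₀ * r * Real.exp (I r))
        (ρ₀ * Real.exp (I x) / Real.sqrt (f x)) x := by
      have := hd3
      refine this.congr_deriv ?_
      rw [hg] at *
      beta_reduce at hval ⊢
      linarith [hval]
    have hd5 := hd4.sub_const (ρ₀ * a)
    apply hd5.congr_of_eventuallyEq
    filter_upwards [Ioo_mem_nhds hxm.1 hxm.2] with y hy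
    rw [hρ y hy]
  -- Step H : derivative of sqrt(· - a)
  have hψd : ∀ x ∈ Set.Ioo a c,
      HasDerivAt (fun r => Real.sqrt (r - a)) (1 / (2 * Real.sqrt (x - a))) x := by
    intro x hx
    have hxa : x - a ≠ 0 := by have := hx.1; intro h; linarith [sub_eq_zero.mp h]
    have h := (Real.hasDerivAt_sqrt hxa).comp x ((hasDerivAt_id x).sub_const a)
    simpa [Function.comp_def] using h
  have hψ0 : ∀ x ∈ Set.Ioo a c, (1 / (2 * Real.sqrt (x - a))) ≠ 0 := by
    intro x hx
    have : 0 < Real.sqrt (x - a) := Real.sqrt_pos.mpr (by linarith [hx.1])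
    positivity
  have hψtend : Tendsto (fun r => Real.sqrt (r - a)) (𝓝[>] a) (𝓝 0) := by
    have h := ((Real.continuous_sqrt.comp (continuous_sub_right a)).tendsto a).mono_left
      (nhdsWithin_le_nhds : 𝓝[>] a ≤ 𝓝 a)
    simpa [Function.comp_def] using h
  -- Step I : limit of ratio of derivatives
  have hslope : Tendsto (fun x => f x / (x - a)) (𝓝[>] a) (𝓝 f') := by
    have h1 := hasDerivAt_iff_tendsto_slope.mp hderiv
    have h2 := h1.mono_left (nhdsWithin_mono a (fun y (hy : y ∈ Set.Ioi a) =>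
      (ne_of_gt hy : y ≠ a)))
    refine h2.congr fun x => ?_
    rw [slope_def_field, hfa, sub_zero]
  have hinv : Tendsto (fun x => (x - a) / f x) (𝓝[>] a) (𝓝 f'⁻¹) := by
    simpa only [inv_div] using hslope.inv₀ hf'.ne'
  have hsqrtt : Tendsto (fun x => Real.sqrt ((x - a) / f x)) (𝓝[>] a) (𝓝 (Real.sqrt f'⁻¹)) :=
    (Real.continuous_sqrt.tendsto _).comp hinv
  have hmain : Tendsto (fun x => 2 * ρ₀ * Real.exp (I x) * Real.sqrt ((x - a) / f x))
      (𝓝[>] a) (𝓝 (2 * ρ₀ / Real.sqrt f')) := by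
    have h := ((tendsto_const_nhds (x := (2:ℝ) * ρ₀)).mul hexp).mul hsqrtt
    have hv : 2 * ρ₀ * 1 * Real.sqrt f'⁻¹ = 2 * ρ₀ / Real.sqrt f' := by
      rw [Real.sqrt_inv]; field_simp
    rw [← hv]
    exact h
  have hdiv : Tendsto (fun x => (ρ₀ * Real.exp (I x) / Real.sqrt (f x)) /
      (1 / (2 * Real.sqrt (x - a)))) (𝓝[>] a) (𝓝 (2 * ρ₀ / Real.sqrt f')) := by
    refine hmain.congr' ?_
    filter_upwards [hmemc] with x hx
    have hfx : 0 < f x := hpos x (hIooIoo hx)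
    have hxa : (0:ℝ) < x - a := by linarith [hx.1]
    have hsq : Real.sqrt (f x) ≠ 0 := (Real.sqrt_pos.mpr hfx).ne'
    have hsx : Real.sqrt (x - a) ≠ 0 := (Real.sqrt_pos.mpr hxa).ne'
    rw [Real.sqrt_div hxa.le]
    field_simp
  -- Step J : L'Hôpital
  have hquot : Tendsto (fun x => (ρ x - ρ₀ * a) / Real.sqrt (x - a)) (𝓝[>] a)
      (𝓝 (2 * ρ₀ / Real.sqrt f')) :=
    HasDerivAt.lhopital_zero_right_on_Ioo hac hφd hψd hψ0 hρ0 hψtend hdiv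
  -- Step K : conclude
  have hsf : 0 < Real.sqrt f' := Real.sqrt_pos.mpr hf'
  have hL : (2 * ρ₀ / Real.sqrt f') ≠ 0 := by positivity
  have hinv2 : Tendsto (fun x => Real.sqrt (x - a) / (ρ x - ρ₀ * a)) (𝓝[>] a)
      (𝓝 (2 * ρ₀ / Real.sqrt f')⁻¹) := by
    simpa only [inv_div] using hquot.inv₀ hL
  have hsq2 := hinv2.pow 2
  have hval2 : ((2 * ρ₀ / Real.sqrt f')⁻¹) ^ 2 = f' / (4 * ρ₀ ^ 2) := by
    rw [inv_div, div_pow, Real.sq_sqrt hf'.le, mul_pow]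
    norm_num
  rw [hval2] at hsq2
  refine hsq2.congr' ?_
  filter_upwards [self_mem_nhdsWithin] with r (hr : r ∈ Set.Ioi a)
  rw [div_pow, Real.sq_sqrt (by simp only [Set.mem_Ioi] at hr; linarith : (0:ℝ) ≤ r - a)]
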